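/- Let (Ω, ℙ) be a probability space, let (Q_n) and (Q'_n) be sequences of real-valued random variables on Ω, and let (a_n) be a sequence of positive reals with a_n → ∞. Suppose that a_n·(Q_n − 1/2) converges in distribution to the standard normal law N(0,1), and that a_n·(Q_n + Q'_n − 1) converges to 0 in probability. Then a_n·(1/2 − min(Q_n, Q'_n)) converges in distribution to the half-normal law, i.e. to the pushforward of the standard Gaussian measure on ℝ under the absolute value map. -/

import Mathlib

open MeasureTheory Filter ProbabilityTheory BoundedContinuousFunction
open scoped ENNReal NNReal

/-- Slutsky-type lemma: if `Wf n` converges in distribution to `μ` and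
`Zf n - Wf n` converges to `0` in probability, then `Zf n` converges in distribution to `μ`. -/
lemma slutsky_aux {Ω : Type*} [MeasureSpace Ω] [IsProbabilityMeasure (ℙ : Measure Ω)]
    (Zf Wf : ℕ → Ω → ℝ) (hZm : ∀ n, Measurable (Zf n)) (hWm : ∀ n, Measurable (Wf n))
    (μ : Measure ℝ) [IsProbabilityMeasure μ]
    (hW : ∀ f : ℝ →ᵇ ℝ, Tendsto (fun n => ∫ x, f x ∂(Measure.map (Wf n) ℙ)) atTop
      (nhds (∫ x, f x ∂μ)))
    (hdiff : ∀ ε : ℝ, 0 < ε →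
      Tendsto (fun n => ℙ {ω | ε < |Zf n ω - Wf n ω|}) atTop (nhds 0)) :
    ∀ f : ℝ →ᵇ ℝ, Tendsto (fun n => ∫ x, f x ∂(Measure.map (Zf n) ℙ)) atTop
      (nhds (∫ x, f x ∂μ)) := by
  have hZpm : ∀ n, IsProbabilityMeasure (Measure.map (Zf n) ℙ) :=
    fun n => Measure.isProbabilityMeasure_map (hZm n).aemeasurable
  have hWpm : ∀ n, IsProbabilityMeasure (Measure.map (Wf n) ℙ) :=
    fun n => Measure.isProbabilityMeasure_map (hWm n).aemeasurable
  set μZ : ℕ → ProbabilityMeasure ℝ := fun n => ⟨Measure.map (Zf n) ℙ, hZpm n⟩ with hμZ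
  set μW : ℕ → ProbabilityMeasure ℝ := fun n => ⟨Measure.map (Wf n) ℙ, hWpm n⟩ with hμW
  set μL : ProbabilityMeasure ℝ := ⟨μ, inferInstance⟩ with hμL
  have hWp : Tendsto μW atTop (nhds μL) :=
    ProbabilityMeasure.tendsto_iff_forall_integral_tendsto.mpr (fun f => hW f)
  have h_opens : ∀ G, IsOpen G → μL G ≤ atTop.liminf (fun n => μZ n G) := by
    intro G hG
    have aux : (ENNReal.ofNNReal (atTop.liminf fun n => μZ n G)) =
        atTop.liminf (fun n => ((μZ n G : ℝ≥0∞))) := by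
      refine Monotone.map_liminf_of_continuousAt (F := atTop) ENNReal.coe_mono
        (fun n => μZ n G) ?_ ?_ ?_
      · exact ENNReal.continuous_coe.continuousAt
      · exact IsBoundedUnder.isCoboundedUnder_ge ⟨1, by simp⟩
      · exact ⟨0, by simp⟩
    rw [← ENNReal.coe_le_coe, aux]
    simp only [ProbabilityMeasure.ennreal_coeFn_eq_coeFn_toMeasure]
    have hu : ∀ n, (μZ n : Measure ℝ) G = ℙ (Zf n ⁻¹' G) :=
      fun n => Measure.map_apply (hZm n) hG.measurableSet
    simp only [hu]
    -- inner approximation of `G` by open sets at distance `≥ 1/(k+1)` from `Gᶜ`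
    set S : ℕ → Set ℝ := fun k => (Metric.cthickening (1/((k : ℝ)+1)) Gᶜ)ᶜ with hShyp
    have hSopen : ∀ k, IsOpen (S k) :=
      fun k => Metric.isClosed_cthickening.isOpen_compl
    have hSmono : Monotone S := by
      intro i j hij
      apply Set.compl_subset_compl.mpr
      apply Metric.cthickening_mono
      apply one_div_le_one_div_of_le
      · positivity
      · have : (i : ℝ) ≤ (j : ℝ) := by exact_mod_cast hij
        linarith
    have hSG : (⋃ k, S k) = G := by
      apply subset_antisymm
      · refine Set.iUnion_subset fun k x hx => ?_
        by_contra hxG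
        exact hx (Metric.self_subset_cthickening _ hxG)
      · intro x hx
        have hcl : x ∉ closure Gᶜ := by
          rw [hG.isClosed_compl.closure_eq]; exact fun h => h hx
        have hev := tendsto_one_div_add_atTop_nhds_zero_nat.eventually
          (Metric.eventually_notMem_cthickening_of_infEdist_pos hcl)
        obtain ⟨k, hk⟩ := hev.exists
        exact Set.mem_iUnion.mpr ⟨k, hk⟩
    have hmeasG : (μL : Measure ℝ) G = ⨆ k, (μL : Measure ℝ) (S k) := by
      rw [← hSG, Directed.measure_iUnion hSmono.directed_le]
    rw [hmeasG]
    refine iSup_le fun k => ?_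
    have εpos : (0:ℝ) < 1/((k : ℝ)+1) := by positivity
    set ε : ℝ := 1/((k : ℝ)+1) with hε
    -- lower bound from the weak convergence of `Wf`
    have h1 : (μL : Measure ℝ) (S k) ≤ atTop.liminf (fun n => (μW n : Measure ℝ) (S k)) :=
      ProbabilityMeasure.le_liminf_measure_open_of_tendsto hWp (hSopen k)
    have hWS : ∀ n, (μW n : Measure ℝ) (S k) = ℙ (Wf n ⁻¹' (S k)) :=
      fun n => Measure.map_apply (hWm n) (hSopen k).measurableSet
    have hsub : ∀ n, Wf n ⁻¹' (S k) ⊆ (Zf n ⁻¹' G) ∪ {ω | ε < |Zf n ω - Wf n ω|} := by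
      intro n ω hω
      by_contra hc
      simp only [Set.mem_union, Set.mem_preimage, Set.mem_setOf_eq, not_or, not_lt] at hc
      obtain ⟨h1', h2'⟩ := hc
      refine hω (Metric.mem_cthickening_of_dist_le (Wf n ω) (Zf n ω) ε Gᶜ h1' ?_)
      rw [Real.dist_eq, abs_sub_comm]
      exact h2'
    have hle : ∀ n, ℙ (Wf n ⁻¹' (S k)) ≤
        ℙ (Zf n ⁻¹' G) + ℙ {ω | ε < |Zf n ω - Wf n ω|} :=
      fun n => (measure_mono (hsub n)).trans (measure_union_le _ _)
    have hv := hdiff ε εpos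
    refine h1.trans ?_
    refine ENNReal.le_of_forall_pos_le_add fun δ δpos _ => ?_
    have hδpos : (0:ℝ≥0∞) < (δ : ℝ≥0∞) := by exact_mod_cast δpos
    have hev : ∀ᶠ n in atTop, ℙ {ω | ε < |Zf n ω - Wf n ω|} ≤ (δ : ℝ≥0∞) :=
      hv.eventually_le_const hδpos
    have hstep : atTop.liminf (fun n => (μW n : Measure ℝ) (S k)) ≤
        atTop.liminf (fun n => ℙ (Zf n ⁻¹' G) + (δ : ℝ≥0∞)) := by
      refine liminf_le_liminf ?_
      filter_upwards [hev] with n hn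
      rw [hWS n]
      exact (hle n).trans (add_le_add_right hn _)
    have hbdd : IsBoundedUnder (· ≥ ·) atTop (fun n => ℙ (Zf n ⁻¹' G)) :=
      ⟨0, Filter.eventually_map.mpr (Filter.Eventually.of_forall fun _ => zero_le)⟩
    have hcobdd : IsCoboundedUnder (· ≥ ·) atTop (fun n => ℙ (Zf n ⁻¹' G)) :=
      IsBoundedUnder.isCoboundedUnder_ge
        ⟨⊤, Filter.eventually_map.mpr (Filter.Eventually.of_forall fun _ => le_top)⟩
    rwa [liminf_add_const atTop (fun n => ℙ (Zf n ⁻¹' G)) (δ : ℝ≥0∞) hcobdd hbdd] at hstep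
  have hZp : Tendsto μZ atTop (nhds μL) := tendsto_of_forall_isOpen_le_liminf h_opens
  exact fun f => ProbabilityMeasure.tendsto_iff_forall_integral_tendsto.mp hZp f

/-- The minimum statistic is asymptotically half-normal: if `aₙ (Qₙ - 1/2)` converges in
distribution to `N(0,1)` and `aₙ (Qₙ + Q'ₙ - 1)` converges to `0` in probability, then
`aₙ (1/2 - min Qₙ Q'ₙ)` converges in distribution to the half-normal law, i.e. the pushforward
of the standard Gaussian measure under the absolute value map. -/
theorem min_statistic_halfNormal
    {Ω : Type*} [MeasureSpace Ω] [IsProbabilityMeasure (ℙ : Measure Ω)]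
    (Q Q' : ℕ → Ω → ℝ) (hQmeas : ∀ n, Measurable (Q n)) (hQ'meas : ∀ n, Measurable (Q' n))
    (a : ℕ → ℝ) (ha_pos : ∀ n, 0 < a n) (ha : Tendsto a atTop atTop)
    (hQdist : ∀ f : ℝ →ᵇ ℝ,
      Tendsto (fun n => ∫ x, f x ∂(Measure.map (fun ω => a n * (Q n ω - 1/2)) ℙ)) atTop
        (nhds (∫ x, f x ∂(gaussianReal 0 1))))
    (hprob : ∀ ε : ℝ, 0 < ε →
      Tendsto (fun n => ℙ {ω | ε < |a n * (Q n ω + Q' n ω - 1)|}) atTop (nhds 0)) :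
    ∀ f : ℝ →ᵇ ℝ,
      Tendsto (fun n => ∫ x, f x ∂(Measure.map (fun ω => a n * (1/2 - min (Q n ω) (Q' n ω))) ℙ))
        atTop
        (nhds (∫ x, f x ∂(Measure.map (fun x : ℝ => |x|) (gaussianReal 0 1)))) := by
  have hXm : ∀ n, Measurable (fun ω => a n * (Q n ω - 1/2)) :=
    fun n => measurable_const.mul ((hQmeas n).sub measurable_const)
  have hZm : ∀ n, Measurable (fun ω => a n * (1/2 - min (Q n ω) (Q' n ω))) :=
    fun n => measurable_const.mul (measurable_const.sub ((hQmeas n).min (hQ'meas n)))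
  have hWm : ∀ n, Measurable (fun ω => |a n * (Q n ω - 1/2)|) :=
    fun n => (hXm n).abs
  -- the key deterministic bound
  have hkey : ∀ n ω, abs (a n * (1/2 - min (Q n ω) (Q' n ω)) - |a n * (Q n ω - 1/2)|) ≤
      |a n * (Q n ω + Q' n ω - 1)| := by
    intro n ω
    set x : ℝ := a n * (Q n ω - 1/2) with hx
    set y : ℝ := a n * (Q n ω + Q' n ω - 1) with hy
    have hZeq : a n * (1/2 - min (Q n ω) (Q' n ω)) = max (-x) (x - y) := by
      rcases le_total (Q n ω) (Q' n ω) with h | h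
      · rw [min_eq_left h, max_eq_left (by
          rw [hx, hy]; nlinarith [(ha_pos n).le] : x - y ≤ -x)]
        rw [hx]; ring
      · rw [min_eq_right h, max_eq_right (by
          rw [hx, hy]; nlinarith [(ha_pos n).le] : -x ≤ x - y)]
        rw [hx, hy]; ring
    have hWeq : |x| = max (-x) x := by rw [abs_eq_max_neg, max_comm]
    rw [hZeq, hWeq]
    have := abs_max_sub_max_le_max (-x) (x - y) (-x) x
    simpa using this
  have habs : IsProbabilityMeasure (Measure.map (fun x : ℝ => |x|) (gaussianReal 0 1)) :=
    Measure.isProbabilityMeasure_map continuous_abs.measurable.aemeasurable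
  -- weak convergence of |X n| to the half-normal law
  have hW : ∀ f : ℝ →ᵇ ℝ,
      Tendsto (fun n => ∫ x, f x ∂(Measure.map (fun ω => |a n * (Q n ω - 1/2)|) ℙ)) atTop
        (nhds (∫ x, f x ∂(Measure.map (fun x : ℝ => |x|) (gaussianReal 0 1)))) := by
    intro f
    set cabs : C(ℝ, ℝ) := ⟨fun x => |x|, continuous_abs⟩ with hcabs
    have habs_int : ∀ ν : Measure ℝ,
        ∫ x, f x ∂(Measure.map (fun x : ℝ => |x|) ν) =
          ∫ x, (f.compContinuous cabs) x ∂ν := by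
      intro ν
      rw [integral_map continuous_abs.measurable.aemeasurable
        f.continuous.aestronglyMeasurable]
      rfl
    have hmapped : ∀ n, Measure.map (fun ω => |a n * (Q n ω - 1/2)|) ℙ =
        Measure.map (fun x : ℝ => |x|) (Measure.map (fun ω => a n * (Q n ω - 1/2)) ℙ) :=
      fun n => (Measure.map_map continuous_abs.measurable (hXm n)).symm
    have heq : (fun n => ∫ x, f x ∂(Measure.map (fun ω => |a n * (Q n ω - 1/2)|) ℙ)) =
        fun n => ∫ x, (f.compContinuous cabs) x
          ∂(Measure.map (fun ω => a n * (Q n ω - 1/2)) ℙ) := by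
      funext n; rw [hmapped n, habs_int]
    rw [heq, habs_int]
    exact hQdist (f.compContinuous cabs)
  -- convergence in probability of the difference
  have hdiff : ∀ ε : ℝ, 0 < ε →
      Tendsto (fun n =>
        ℙ {ω | ε < abs (a n * (1/2 - min (Q n ω) (Q' n ω)) - |a n * (Q n ω - 1/2)|)}) atTop
        (nhds 0) := by
    intro ε hε
    refine tendsto_of_tendsto_of_tendsto_of_le_of_le tendsto_const_nhds (hprob ε hε)
      (fun n => zero_le) (fun n => measure_mono fun ω hω => lt_of_lt_of_le hω (hkey n ω))
  exact slutsky_aux (fun n ω => a n * (1/2 - min (Q n ω) (Q' n ω)))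
    (fun n ω => |a n * (Q n ω - 1/2)|) hZm hWm
    (Measure.map (fun x : ℝ => |x|) (gaussianReal 0 1)) hW hdiff
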